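/- arXiv:2008.01024 — 2 statements merged into one kernel-verified Lean document; each statement's English description precedes it below -/
import Mathlib

section
/- Let Ã(0), …, Ã(T) ∈ ℝ^{n×n} be entrywise nonnegative, let the entries of K̃(k;·) be nonnegative posynomials of θ ∈ ℝ^m_{>0}, let x(0) ∈ ℝ^n be entrywise nonnegative, let ℓ(k) ∈ ℝ^n be entrywise positive, and define x(k;θ) = (Ã(k−1)+K̃(k−1;θ))⋯(Ã(0)+K̃(0;θ))x(0). Fix 1 ≤ k ≤ T+1 and assume x(k;exp[z])^⊤ ℓ(k) > 0 for all z ∈ ℝ^m. Then the finite-time stability constraint function z ↦ log(x(k;exp[z])^⊤ ℓ(k)) is convex on ℝ^m. -/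
/-- A nonnegative posynomial on the positive orthant: a finite sum of monomials
with nonnegative coefficients and real exponents (possibly the zero function). -/
def IsNonnegPosynomial (m : ℕ) (f : (Fin m → ℝ) → ℝ) : Prop :=
  ∃ (N : ℕ) (c : Fin N → ℝ) (a : Fin N → Fin m → ℝ),
    (∀ j, 0 ≤ c j) ∧
    ∀ v : Fin m → ℝ, (∀ i, 0 < v i) → f v = ∑ j, c j * ∏ i, (v i) ^ (a j i)

/-- The state trajectory of the parametrized system
x(k+1;θ) = (Ã(k) + K̃(k;θ)) x(k;θ), x(0;θ) = x(0). -/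
def paramTraj (n m : ℕ) (Atil : ℕ → Matrix (Fin n) (Fin n) ℝ)
    (Ktil : ℕ → (Fin m → ℝ) → Matrix (Fin n) (Fin n) ℝ)
    (x0 : Fin n → ℝ) : ℕ → (Fin m → ℝ) → Fin n → ℝ
  | 0, _ => x0
  | k + 1, θ => (Atil k + Ktil k θ).mulVec (paramTraj n m Atil Ktil x0 k θ)

lemma posy_const {m : ℕ} {c : ℝ} (hc : 0 ≤ c) :
    IsNonnegPosynomial m (fun _ => c) := by
  refine ⟨1, fun _ => c, fun _ _ => 0, fun _ => hc, fun v hv => ?_⟩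
  simp

lemma posy_add {m : ℕ} {f g : (Fin m → ℝ) → ℝ}
    (hf : IsNonnegPosynomial m f) (hg : IsNonnegPosynomial m g) :
    IsNonnegPosynomial m (fun v => f v + g v) := by
  obtain ⟨N₁, c₁, a₁, hc₁, h₁⟩ := hf
  obtain ⟨N₂, c₂, a₂, hc₂, h₂⟩ := hg
  refine ⟨N₁ + N₂, Fin.append c₁ c₂, Fin.append a₁ a₂, ?_, fun v hv => ?_⟩
  · intro j
    refine Fin.addCases (fun j => ?_) (fun j => ?_) j <;>
      simp [Fin.append_left, Fin.append_right, hc₁, hc₂]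
  · show f v + g v = _
    rw [h₁ v hv, h₂ v hv, Fin.sum_univ_add]
    simp [Fin.append_left, Fin.append_right]

lemma posy_mul {m : ℕ} {f g : (Fin m → ℝ) → ℝ}
    (hf : IsNonnegPosynomial m f) (hg : IsNonnegPosynomial m g) :
    IsNonnegPosynomial m (fun v => f v * g v) := by
  obtain ⟨N₁, c₁, a₁, hc₁, h₁⟩ := hf
  obtain ⟨N₂, c₂, a₂, hc₂, h₂⟩ := hg
  refine ⟨N₁ * N₂,
    fun j => c₁ (finProdFinEquiv.symm j).1 * c₂ (finProdFinEquiv.symm j).2,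
    fun j i => a₁ (finProdFinEquiv.symm j).1 i + a₂ (finProdFinEquiv.symm j).2 i,
    fun j => mul_nonneg (hc₁ _) (hc₂ _), fun v hv => ?_⟩
  show f v * g v = _
  have step1 : f v * g v = ∑ p : Fin N₁ × Fin N₂,
      (c₁ p.1 * ∏ i, v i ^ a₁ p.1 i) * (c₂ p.2 * ∏ i, v i ^ a₂ p.2 i) := by
    rw [h₁ v hv, h₂ v hv, Finset.sum_mul_sum]
    exact (Fintype.sum_prod_type fun p => (c₁ p.1 * ∏ i, v i ^ a₁ p.1 i) * (c₂ p.2 * ∏ i, v i ^ a₂ p.2 i)).symm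
  rw [step1]
  refine (Fintype.sum_equiv finProdFinEquiv.symm _ _ fun j => ?_).symm
  set p := finProdFinEquiv.symm j
  have : ∀ i : Fin m, v i ^ (a₁ p.1 i + a₂ p.2 i)
      = v i ^ a₁ p.1 i * v i ^ a₂ p.2 i := fun i => Real.rpow_add (hv i) _ _
  rw [Finset.prod_congr rfl fun i _ => this i, Finset.prod_mul_distrib]
  ring

lemma posy_sum {m : ℕ} {ι : Type*} (s : Finset ι) (f : ι → (Fin m → ℝ) → ℝ)
    (hf : ∀ j ∈ s, IsNonnegPosynomial m (f j)) :
    IsNonnegPosynomial m (fun v => ∑ j ∈ s, f j v) := by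
  classical
  induction s using Finset.induction with
  | empty => simpa using posy_const (m := m) le_rfl
  | @insert x s' hx ih =>
    have h1 : IsNonnegPosynomial m (f x) := hf x (Finset.mem_insert_self _ _)
    have h2 : IsNonnegPosynomial m (fun v => ∑ j ∈ s', f j v) :=
      ih fun j hj => hf j (Finset.mem_insert_of_mem hj)
    have := posy_add h1 h2
    simpa [Finset.sum_insert hx] using this

/-- Key analytic fact: `z ↦ log (∑ j, c j * exp (∑ i, a j i * z i))` is convex
when all `c j ≥ 0` and the sum is positive everywhere. -/
lemma logsumexp_convex {m N : ℕ} (c : Fin N → ℝ) (a : Fin N → Fin m → ℝ)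
    (hc : ∀ j, 0 ≤ c j)
    (hpos : ∀ z : Fin m → ℝ, 0 < ∑ j, c j * Real.exp (∑ i, a j i * z i)) :
    ConvexOn ℝ Set.univ
      (fun z : Fin m → ℝ => Real.log (∑ j, c j * Real.exp (∑ i, a j i * z i))) := by
  set F : (Fin m → ℝ) → ℝ := fun z => ∑ j, c j * Real.exp (∑ i, a j i * z i) with hF
  refine ⟨convex_univ, fun x _ y _ p q hp hq hpq => ?_⟩
  rcases hp.eq_or_lt with rfl | hp'
  · simp at hpq; subst hpq; simp
  rcases hq.eq_or_lt with rfl | hq'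
  · simp at hpq; subst hpq; simp
  -- inner product of a j with p•x+q•y
  have hin : ∀ j, (∑ i, a j i * (p • x + q • y) i)
      = p * (∑ i, a j i * x i) + q * (∑ i, a j i * y i) := by
    intro j
    rw [Finset.mul_sum, Finset.mul_sum, ← Finset.sum_add_distrib]
    refine Finset.sum_congr rfl fun i _ => ?_
    simp [Pi.add_apply, Pi.smul_apply, smul_eq_mul]; ring
  have hterm : ∀ j, c j * Real.exp (∑ i, a j i * (p • x + q • y) i)
      = (c j * Real.exp (∑ i, a j i * x i)) ^ p
        * (c j * Real.exp (∑ i, a j i * y i)) ^ q := by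
    intro j
    rw [hin j, Real.exp_add, mul_comm p, mul_comm q, Real.exp_mul, Real.exp_mul]
    rcases (hc j).eq_or_lt with h0 | h0
    · rw [← h0]; simp [Real.zero_rpow hp'.ne', Real.zero_rpow hq'.ne']
    · rw [Real.mul_rpow h0.le (Real.exp_pos _).le,
        Real.mul_rpow h0.le (Real.exp_pos _).le]
      have : c j ^ p * c j ^ q = c j := by
        rw [← Real.rpow_add h0, hpq, Real.rpow_one]
      calc c j * (Real.exp (∑ i, a j i * x i) ^ p * Real.exp (∑ i, a j i * y i) ^ q)
          = (c j ^ p * c j ^ q) * (Real.exp (∑ i, a j i * x i) ^ p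
              * Real.exp (∑ i, a j i * y i) ^ q) := by rw [this]
        _ = _ := by ring
  have hconj : Real.HolderConjugate (1/p) (1/q) := by
    rw [Real.holderConjugate_iff]
    constructor
    · rw [lt_div_iff₀ hp', one_mul]; linarith
    · rw [one_div, one_div, inv_inv, inv_inv]; exact hpq
  have hnn1 : ∀ j, 0 ≤ (c j * Real.exp (∑ i, a j i * x i)) ^ p :=
    fun j => Real.rpow_nonneg (mul_nonneg (hc j) (Real.exp_pos _).le) _
  have hnn2 : ∀ j, 0 ≤ (c j * Real.exp (∑ i, a j i * y i)) ^ q :=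
    fun j => Real.rpow_nonneg (mul_nonneg (hc j) (Real.exp_pos _).le) _
  have hhold := Real.inner_le_Lp_mul_Lq_of_nonneg (Finset.univ (α := Fin N)) hconj
    (f := fun j => (c j * Real.exp (∑ i, a j i * x i)) ^ p)
    (g := fun j => (c j * Real.exp (∑ i, a j i * y i)) ^ q)
    (fun j _ => hnn1 j) (fun j _ => hnn2 j)
  have hrp : ∀ (X r : ℝ), 0 ≤ X → r ≠ 0 → (X ^ r) ^ (1/r) = X := by
    intro X r hX hr
    rw [← Real.rpow_mul hX, mul_one_div_cancel hr, Real.rpow_one]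
  have hsum1 : (∑ j, ((c j * Real.exp (∑ i, a j i * x i)) ^ p) ^ (1/p))
      = F x := by
    refine Finset.sum_congr rfl fun j _ => ?_
    exact hrp _ _ (mul_nonneg (hc j) (Real.exp_pos _).le) hp'.ne'
  have hsum2 : (∑ j, ((c j * Real.exp (∑ i, a j i * y i)) ^ q) ^ (1/q))
      = F y := by
    refine Finset.sum_congr rfl fun j _ => ?_
    exact hrp _ _ (mul_nonneg (hc j) (Real.exp_pos _).le) hq'.ne'
  have hFbound : F (p • x + q • y) ≤ (F x) ^ p * (F y) ^ q := by
    have e1 : F (p • x + q • y) = ∑ j, (c j * Real.exp (∑ i, a j i * x i)) ^ p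
        * (c j * Real.exp (∑ i, a j i * y i)) ^ q :=
      Finset.sum_congr rfl fun j _ => hterm j
    rw [e1]
    rw [hsum1, hsum2, one_div_one_div, one_div_one_div] at hhold
    exact hhold
  have hFx : (0:ℝ) < F x := hpos x
  have hFy : (0:ℝ) < F y := hpos y
  show Real.log (F (p • x + q • y)) ≤ p • Real.log (F x) + q • Real.log (F y)
  calc Real.log (F (p • x + q • y)) ≤ Real.log ((F x) ^ p * (F y) ^ q) :=
        Real.log_le_log (hpos _) hFbound
    _ = p • Real.log (F x) + q • Real.log (F y) := by
        rw [Real.log_mul (Real.rpow_pos_of_pos hFx p).ne' (Real.rpow_pos_of_pos hFy q).ne',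
          Real.log_rpow hFx, Real.log_rpow hFy, smul_eq_mul, smul_eq_mul]

lemma traj_posy (n m T : ℕ) (Atil : ℕ → Matrix (Fin n) (Fin n) ℝ)
    (Ktil : ℕ → (Fin m → ℝ) → Matrix (Fin n) (Fin n) ℝ)
    (hA : ∀ k ≤ T, ∀ i j, 0 ≤ Atil k i j)
    (hK : ∀ k ≤ T, ∀ i j, IsNonnegPosynomial m (fun θ => Ktil k θ i j))
    (x0 : Fin n → ℝ) (hx0 : ∀ i, 0 ≤ x0 i) :
    ∀ k ≤ T + 1, ∀ i, IsNonnegPosynomial m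
      (fun θ => paramTraj n m Atil Ktil x0 k θ i) := by
  intro k
  induction k with
  | zero => intro _ i; exact posy_const (hx0 i)
  | succ k ih =>
    intro hk i
    have hkT : k ≤ T := Nat.lt_succ_iff.mp hk
    have hstep : (fun θ => paramTraj n m Atil Ktil x0 (k+1) θ i)
        = fun θ => ∑ j, (Atil k i j + Ktil k θ i j)
            * paramTraj n m Atil Ktil x0 k θ j := by
      funext θ
      simp [paramTraj, Matrix.mulVec, dotProduct, Matrix.add_apply]
    rw [hstep]
    refine posy_sum Finset.univ _ fun j _ => ?_
    exact posy_mul (posy_add (posy_const (hA k hkT i j)) (hK k hkT i j))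
      (ih (le_trans (Nat.le_succ k) hk) j)

/-- Under nonnegativity of the Ã(k), posynomiality of the entries of
K̃(k;·), nonnegativity of x(0), entrywise positivity of ℓ(k), and positivity of
x(k;exp[z])^⊤ℓ(k), the finite-time stability constraint function
z ↦ log(x(k;exp[z])^⊤ ℓ(k)) is convex on ℝ^m, for fixed 1 ≤ k ≤ T+1. -/
theorem constraint_function_log_convex
    (n m T : ℕ) (Atil : ℕ → Matrix (Fin n) (Fin n) ℝ)
    (Ktil : ℕ → (Fin m → ℝ) → Matrix (Fin n) (Fin n) ℝ)
    (hA : ∀ k ≤ T, ∀ i j, 0 ≤ Atil k i j)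
    (hK : ∀ k ≤ T, ∀ i j, IsNonnegPosynomial m (fun θ => Ktil k θ i j))
    (x0 : Fin n → ℝ) (hx0 : ∀ i, 0 ≤ x0 i)
    (ℓ : ℕ → Fin n → ℝ) (hℓ : ∀ k, 1 ≤ k → k ≤ T + 1 → ∀ i, 0 < ℓ k i)
    (k : ℕ) (hk1 : 1 ≤ k) (hk2 : k ≤ T + 1)
    (hpos : ∀ z : Fin m → ℝ,
      0 < ∑ i, paramTraj n m Atil Ktil x0 k (fun i => Real.exp (z i)) i * ℓ k i) :
    ConvexOn ℝ Set.univ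
      (fun z : Fin m → ℝ =>
        Real.log (∑ i, paramTraj n m Atil Ktil x0 k (fun i => Real.exp (z i)) i * ℓ k i)) := by
  have hg : IsNonnegPosynomial m
      (fun θ => ∑ i, paramTraj n m Atil Ktil x0 k θ i * ℓ k i) := by
    refine posy_sum Finset.univ _ fun i _ => ?_
    exact posy_mul (traj_posy n m T Atil Ktil hA hK x0 hx0 k hk2 i)
      (posy_const (hℓ k hk1 hk2 i).le)
  obtain ⟨N, c, a, hc, hrep⟩ := hg
  have hexp : ∀ z : Fin m → ℝ,
      (∑ i, paramTraj n m Atil Ktil x0 k (fun i => Real.exp (z i)) i * ℓ k i)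
      = ∑ j, c j * Real.exp (∑ i, a j i * z i) := by
    intro z
    have := hrep (fun i => Real.exp (z i)) (fun i => Real.exp_pos _)
    simp only at this
    rw [this]
    refine Finset.sum_congr rfl fun j _ => ?_
    congr 1
    calc ∏ i, Real.exp (z i) ^ a j i = ∏ i, Real.exp (z i * a j i) :=
          Finset.prod_congr rfl fun i _ => (Real.exp_mul _ _).symm
      _ = Real.exp (∑ i, z i * a j i) := (Real.exp_sum _ _).symm
      _ = Real.exp (∑ i, a j i * z i) := by simp [mul_comm]
  have heq : (fun z : Fin m → ℝ =>
      Real.log (∑ i, paramTraj n m Atil Ktil x0 k (fun i => Real.exp (z i)) i * ℓ k i))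
      = fun z => Real.log (∑ j, c j * Real.exp (∑ i, a j i * z i)) := by
    funext z; rw [hexp z]
  rw [heq]
  exact logsumexp_convex c a hc fun z => (hexp z) ▸ hpos z
end

section
/- Let Ã(0), …, Ã(T) ∈ ℝ^{n×n} be entrywise nonnegative, let the entries of K̃(k;·) be nonnegative posynomials of θ ∈ ℝ^m_{>0}, let x(0) ∈ ℝ^n be entrywise nonnegative, and define x(k;θ) = (Ã(k−1)+K̃(k−1;θ))⋯(Ã(0)+K̃(0;θ))x(0). Let p > 0 and assume x_i(k;exp[z]) > 0 for all z ∈ ℝ^m, all 1 ≤ k ≤ T+1, and all i ∈ {1,…,n}. Then the log-transformed ℓ^p performance objective z ↦ log((∑_{k=1}^{T+1} ∑_{i=1}^n x_i(k;exp[z])^p)^{1/p}) is convex on ℝ^m. -/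
namespace LCAux

/-- Log-convexity (in multiplicative form) of a nonnegative function on `ℝ^m`. -/
def LC (m : ℕ) (f : (Fin m → ℝ) → ℝ) : Prop :=
  (∀ z, 0 ≤ f z) ∧ ∀ x y : Fin m → ℝ, ∀ a b : ℝ, 0 ≤ a → 0 ≤ b → a + b = 1 →
    f (a • x + b • y) ≤ f x ^ a * f y ^ b

lemma c_le_rpow {c a b : ℝ} (hc : 0 ≤ c) (ha : 0 ≤ a) (hab : a + b = 1) :
    c ≤ c ^ a * c ^ b := by
  rcases eq_or_lt_of_le hc with h | h
  · rcases eq_or_lt_of_le ha with h' | h'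
    · have hb : b = 1 := by linarith
      simp [← h, ← h', hb]
    · simp [← h, Real.zero_rpow (ne_of_gt h')]
  · rw [← Real.rpow_add h, hab, Real.rpow_one]

/-- Two-point Hölder inequality. -/
lemma holder2 {f1 f2 g1 g2 a b : ℝ} (hf1 : 0 ≤ f1) (hf2 : 0 ≤ f2) (hg1 : 0 ≤ g1)
    (hg2 : 0 ≤ g2) (ha : 0 ≤ a) (hb : 0 ≤ b) (hab : a + b = 1) :
    f1 ^ a * f2 ^ b + g1 ^ a * g2 ^ b ≤ (f1 + g1) ^ a * (f2 + g2) ^ b := by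
  rcases eq_or_lt_of_le ha with ha' | ha'
  · have hb1 : b = 1 := by linarith
    simp [← ha', hb1]
  rcases eq_or_lt_of_le hb with hb' | hb'
  · have ha1 : a = 1 := by linarith
    simp [← hb', ha1]
  rcases eq_or_lt_of_le (add_nonneg hf1 hg1) with hF | hF
  · have h1 : f1 = 0 := by linarith
    have h2 : g1 = 0 := by linarith
    simp [h1, h2, Real.zero_rpow (ne_of_gt ha')]
  rcases eq_or_lt_of_le (add_nonneg hf2 hg2) with hG | hG
  · have h1 : f2 = 0 := by linarith
    have h2 : g2 = 0 := by linarith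
    simp [h1, h2, Real.zero_rpow (ne_of_gt hb')]
  set F := f1 + g1 with hFdef
  set G := f2 + g2 with hGdef
  have key : ∀ u v : ℝ, 0 ≤ u → 0 ≤ v →
      u ^ a * v ^ b ≤ F ^ a * G ^ b * (a * (u / F) + b * (v / G)) := by
    intro u v hu hv
    have h1 : (u / F) ^ a * (v / G) ^ b ≤ a * (u / F) + b * (v / G) :=
      Real.geom_mean_le_arith_mean2_weighted ha hb (div_nonneg hu hF.le)
        (div_nonneg hv hG.le) hab
    have h2 : u ^ a * v ^ b = F ^ a * G ^ b * ((u / F) ^ a * (v / G) ^ b) := by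
      rw [Real.div_rpow hu hF.le, Real.div_rpow hv hG.le]
      field_simp [ne_of_gt (Real.rpow_pos_of_pos hF a), ne_of_gt (Real.rpow_pos_of_pos hG b)]
    rw [h2]
    exact mul_le_mul_of_nonneg_left h1
      (mul_nonneg (Real.rpow_nonneg hF.le a) (Real.rpow_nonneg hG.le b))
  calc f1 ^ a * f2 ^ b + g1 ^ a * g2 ^ b
      ≤ F ^ a * G ^ b * (a * (f1 / F) + b * (f2 / G)) +
        F ^ a * G ^ b * (a * (g1 / F) + b * (g2 / G)) :=
        add_le_add (key f1 f2 hf1 hf2) (key g1 g2 hg1 hg2)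
    _ = F ^ a * G ^ b * (a * ((f1 + g1) / F) + b * ((f2 + g2) / G)) := by ring
    _ = F ^ a * G ^ b := by
        rw [← hFdef, ← hGdef, div_self (ne_of_gt hF), div_self (ne_of_gt hG)]
        rw [mul_one, mul_one, hab, mul_one]

lemma LC_const {m : ℕ} {c : ℝ} (hc : 0 ≤ c) : LC m (fun _ => c) := by
  exact ⟨fun _ => hc, fun x y a b ha hb hab => c_le_rpow hc ha hab⟩

lemma LC_zero {m : ℕ} : LC m (fun _ => 0) := LC_const le_rfl

lemma LC_add {m : ℕ} {f g : (Fin m → ℝ) → ℝ} (hf : LC m f) (hg : LC m g) :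
    LC m (fun z => f z + g z) := by
  refine ⟨fun z => add_nonneg (hf.1 z) (hg.1 z), fun x y a b ha hb hab => ?_⟩
  calc f (a • x + b • y) + g (a • x + b • y)
      ≤ f x ^ a * f y ^ b + g x ^ a * g y ^ b :=
        add_le_add (hf.2 x y a b ha hb hab) (hg.2 x y a b ha hb hab)
    _ ≤ (f x + g x) ^ a * (f y + g y) ^ b :=
        holder2 (hf.1 x) (hf.1 y) (hg.1 x) (hg.1 y) ha hb hab

lemma LC_sum {m : ℕ} {ι : Type*} (s : Finset ι) (f : ι → (Fin m → ℝ) → ℝ)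
    (hf : ∀ i ∈ s, LC m (f i)) : LC m (fun z => ∑ i ∈ s, f i z) := by
  classical
  induction s using Finset.induction_on with
  | empty => simpa using LC_zero
  | @insert a s hni ih =>
    have h1 : LC m (f a) := hf a (Finset.mem_insert_self a s)
    have h2 : LC m (fun z => ∑ i ∈ s, f i z) :=
      ih fun i hi => hf i (Finset.mem_insert_of_mem hi)
    have := LC_add h1 h2
    simpa [Finset.sum_insert hni] using this

lemma LC_mul {m : ℕ} {f g : (Fin m → ℝ) → ℝ} (hf : LC m f) (hg : LC m g) :
    LC m (fun z => f z * g z) := by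
  refine ⟨fun z => mul_nonneg (hf.1 z) (hg.1 z), fun x y a b ha hb hab => ?_⟩
  calc f (a • x + b • y) * g (a • x + b • y)
      ≤ (f x ^ a * f y ^ b) * (g x ^ a * g y ^ b) :=
        mul_le_mul (hf.2 x y a b ha hb hab) (hg.2 x y a b ha hb hab)
          (hg.1 _) (mul_nonneg (Real.rpow_nonneg (hf.1 x) a) (Real.rpow_nonneg (hf.1 y) b))
    _ = (f x * g x) ^ a * (f y * g y) ^ b := by
        rw [Real.mul_rpow (hf.1 x) (hg.1 x), Real.mul_rpow (hf.1 y) (hg.1 y)]; ring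

lemma LC_rpow {m : ℕ} {f : (Fin m → ℝ) → ℝ} (hf : LC m f) {p : ℝ} (hp : 0 ≤ p) :
    LC m (fun z => f z ^ p) := by
  refine ⟨fun z => Real.rpow_nonneg (hf.1 z) p, fun x y a b ha hb hab => ?_⟩
  calc f (a • x + b • y) ^ p
      ≤ (f x ^ a * f y ^ b) ^ p :=
        Real.rpow_le_rpow (hf.1 _) (hf.2 x y a b ha hb hab) hp
    _ = (f x ^ p) ^ a * (f y ^ p) ^ b := by
        rw [Real.mul_rpow (Real.rpow_nonneg (hf.1 x) a) (Real.rpow_nonneg (hf.1 y) b),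
          ← Real.rpow_mul (hf.1 x), ← Real.rpow_mul (hf.1 y), mul_comm a p, mul_comm b p,
          Real.rpow_mul (hf.1 x), Real.rpow_mul (hf.1 y)]

lemma LC_monomial {m : ℕ} {c : ℝ} (hc : 0 ≤ c) (A : Fin m → ℝ) :
    LC m (fun z => c * Real.exp (∑ i, A i * z i)) := by
  refine ⟨fun z => mul_nonneg hc (Real.exp_pos _).le, fun x y a b ha hb hab => ?_⟩
  have hexp : ∀ (t : ℝ) (w : ℝ), Real.exp t ^ w = Real.exp (w * t) := by
    intro t w
    rw [Real.rpow_def_of_pos (Real.exp_pos t), Real.log_exp, mul_comm]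
  have hE : Real.exp (∑ i, A i * (a • x + b • y) i)
      = Real.exp (∑ i, A i * x i) ^ a * Real.exp (∑ i, A i * y i) ^ b := by
    rw [hexp, hexp, ← Real.exp_add]
    congr 1
    simp only [Pi.add_apply, Pi.smul_apply, smul_eq_mul]
    rw [Finset.mul_sum, Finset.mul_sum, ← Finset.sum_add_distrib]
    exact Finset.sum_congr rfl fun i _ => by ring
  have hcle : c ≤ c ^ a * c ^ b := c_le_rpow hc ha hab
  calc c * Real.exp (∑ i, A i * (a • x + b • y) i)
      = c * (Real.exp (∑ i, A i * x i) ^ a * Real.exp (∑ i, A i * y i) ^ b) := by rw [hE]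
    _ ≤ (c ^ a * c ^ b) * (Real.exp (∑ i, A i * x i) ^ a * Real.exp (∑ i, A i * y i) ^ b) :=
        mul_le_mul_of_nonneg_right hcle
          (mul_nonneg (Real.rpow_nonneg (Real.exp_pos _).le a)
            (Real.rpow_nonneg (Real.exp_pos _).le b))
    _ = (c * Real.exp (∑ i, A i * x i)) ^ a * (c * Real.exp (∑ i, A i * y i)) ^ b := by
        rw [Real.mul_rpow hc (Real.exp_pos _).le, Real.mul_rpow hc (Real.exp_pos _).le]; ring

lemma LC_of_posynomial {m : ℕ} {f : (Fin m → ℝ) → ℝ} (hf : IsNonnegPosynomial m f) :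
    LC m (fun z => f (fun i => Real.exp (z i))) := by
  obtain ⟨N, c, a, hc, hrep⟩ := hf
  have heq : (fun z : Fin m → ℝ => f (fun i => Real.exp (z i)))
      = fun z => ∑ j, c j * Real.exp (∑ i, a j i * z i) := by
    funext z
    rw [hrep _ (fun i => Real.exp_pos _)]
    refine Finset.sum_congr rfl fun j _ => ?_
    congr 1
    calc ∏ i, Real.exp (z i) ^ a j i
        = ∏ i, Real.exp (a j i * z i) := by
          refine Finset.prod_congr rfl fun i _ => ?_
          rw [Real.rpow_def_of_pos (Real.exp_pos _), Real.log_exp, mul_comm]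
      _ = Real.exp (∑ i, a j i * z i) := (Real.exp_sum _ _).symm
  rw [heq]
  exact LC_sum _ _ fun j _ => LC_monomial (hc j) (a j)

lemma log_convexOn {m : ℕ} {f : (Fin m → ℝ) → ℝ} (hf : LC m f) (hpos : ∀ z, 0 < f z) :
    ConvexOn ℝ Set.univ (fun z => Real.log (f z)) := by
  refine ⟨convex_univ, fun x _ y _ a b ha hb hab => ?_⟩
  calc Real.log (f (a • x + b • y))
      ≤ Real.log (f x ^ a * f y ^ b) :=
        Real.log_le_log (hpos _) (hf.2 x y a b ha hb hab)
    _ = a * Real.log (f x) + b * Real.log (f y) := by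
        rw [Real.log_mul (ne_of_gt (Real.rpow_pos_of_pos (hpos x) a))
          (ne_of_gt (Real.rpow_pos_of_pos (hpos y) b)),
          Real.log_rpow (hpos x), Real.log_rpow (hpos y)]
    _ = a • Real.log (f x) + b • Real.log (f y) := by simp [smul_eq_mul]

end LCAux

/-- Under nonnegativity of the Ã(k), posynomiality of the entries of
K̃(k;·), nonnegativity of x(0), p > 0, and positivity of the trajectory entries
x_i(k;exp[z]) for 1 ≤ k ≤ T+1, the log-transformed ℓ^p performance objective
z ↦ log((∑_{k=1}^{T+1} ∑_i x_i(k;exp[z])^p)^{1/p}) is convex on ℝ^m. -/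
theorem performance_objective_log_convex
    (n m T : ℕ) (Atil : ℕ → Matrix (Fin n) (Fin n) ℝ)
    (Ktil : ℕ → (Fin m → ℝ) → Matrix (Fin n) (Fin n) ℝ)
    (hA : ∀ k ≤ T, ∀ i j, 0 ≤ Atil k i j)
    (hK : ∀ k ≤ T, ∀ i j, IsNonnegPosynomial m (fun θ => Ktil k θ i j))
    (x0 : Fin n → ℝ) (hx0 : ∀ i, 0 ≤ x0 i)
    (p : ℝ) (hp : 0 < p)
    (hpos : ∀ z : Fin m → ℝ, ∀ k, 1 ≤ k → k ≤ T + 1 → ∀ i,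
      0 < paramTraj n m Atil Ktil x0 k (fun i => Real.exp (z i)) i) :
    ConvexOn ℝ Set.univ
      (fun z : Fin m → ℝ =>
        Real.log ((∑ k ∈ Finset.Icc 1 (T + 1), ∑ i,
          (paramTraj n m Atil Ktil x0 k (fun i => Real.exp (z i)) i) ^ p) ^ (1 / p))) := by
  classical
  rcases Nat.eq_zero_or_pos n with hn | hn
  · subst hn
    have : (fun z : Fin m → ℝ =>
        Real.log ((∑ k ∈ Finset.Icc 1 (T + 1), ∑ i : Fin 0,
          (paramTraj 0 m Atil Ktil x0 k (fun i => Real.exp (z i)) i) ^ p) ^ (1 / p)))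
        = fun _ => Real.log ((0 : ℝ) ^ (1 / p : ℝ)) := by
      funext z; simp
    rw [this]
    exact convexOn_const _ convex_univ
  -- main case: n > 0
  have htraj : ∀ k ≤ T + 1, ∀ i, LCAux.LC m
      (fun z => paramTraj n m Atil Ktil x0 k (fun i => Real.exp (z i)) i) := by
    intro k
    induction k with
    | zero => intro _ i; exact LCAux.LC_const (hx0 i)
    | succ k ih =>
      intro hk i
      have hkT : k ≤ T := by omega
      have heq : (fun z : Fin m → ℝ =>
          paramTraj n m Atil Ktil x0 (k + 1) (fun i => Real.exp (z i)) i)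
          = fun z => ∑ j, (Atil k i j + Ktil k (fun i => Real.exp (z i)) i j) *
              paramTraj n m Atil Ktil x0 k (fun i => Real.exp (z i)) j := by
        funext z
        show ((Atil k + Ktil k _).mulVec _) i = _
        rw [Matrix.mulVec, dotProduct]
        simp [Matrix.add_apply]
      rw [heq]
      refine LCAux.LC_sum _ _ fun j _ => LCAux.LC_mul ?_ (ih (by omega) j)
      exact LCAux.LC_add (LCAux.LC_const (hA k hkT i j)) (LCAux.LC_of_posynomial (hK k hkT i j))
  set S : (Fin m → ℝ) → ℝ := fun z => ∑ k ∈ Finset.Icc 1 (T + 1), ∑ i,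
      (paramTraj n m Atil Ktil x0 k (fun i => Real.exp (z i)) i) ^ p with hSdef
  have hSLC : LCAux.LC m S := by
    refine LCAux.LC_sum _ _ fun k hk => LCAux.LC_sum _ _ fun i _ => ?_
    exact LCAux.LC_rpow (htraj k (Finset.mem_Icc.mp hk).2 i) hp.le
  have hSpos : ∀ z, 0 < S z := by
    intro z
    have hne : (Finset.Icc 1 (T + 1)).Nonempty := ⟨1, Finset.mem_Icc.mpr ⟨le_rfl, by omega⟩⟩
    refine Finset.sum_pos (fun k hk => ?_) hne
    obtain ⟨hk1, hk2⟩ := Finset.mem_Icc.mp hk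
    haveI : Nonempty (Fin n) := Fin.pos_iff_nonempty.mp hn
    refine Finset.sum_pos (fun i _ => ?_) Finset.univ_nonempty
    exact Real.rpow_pos_of_pos (hpos z k hk1 hk2 i) p
  have hconv : ConvexOn ℝ Set.univ (fun z => Real.log (S z)) := LCAux.log_convexOn hSLC hSpos
  have hsm := hconv.smul (c := 1 / p) (by positivity)
  have heq2 : (fun z : Fin m → ℝ =>
        Real.log ((∑ k ∈ Finset.Icc 1 (T + 1), ∑ i,
          (paramTraj n m Atil Ktil x0 k (fun i => Real.exp (z i)) i) ^ p) ^ (1 / p)))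
      = fun z => (1 / p) • Real.log (S z) := by
    funext z
    rw [show (∑ k ∈ Finset.Icc 1 (T + 1), ∑ i,
        (paramTraj n m Atil Ktil x0 k (fun i => Real.exp (z i)) i) ^ p) = S z from rfl,
      Real.log_rpow (hSpos z), smul_eq_mul]
  rw [heq2]
  exact hsm
end
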